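/- Let mu be a measure of k-dimensional polynomial growth on R^n, mu(B(x,r)) <= c_mu r^k. Let Q be a cube, x_Q its center, and Q_j = (c_n alpha)^j Q for j >= 0. Suppose alpha > 3, beta > (c_n alpha)^k, and Q_N is the smallest (c_n alpha, beta)-doubling cube among the Q_j with j >= 1 (i.e., mu(c_n alpha Q_j) > beta mu(Q_j) for 1 <= j < N and mu(c_n alpha Q_N) <= beta mu(Q_N)). Then the integral over Q_{N+1} \ Q of |x - x_Q|^{-k} dmu(x) is bounded by a constant (depending only on k, c_n, alpha, beta, c_mu) times mu(Q_N)/l(Q_N)^k, and hence by an absolute constant independent of Q. -/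

import Mathlib

open MeasureTheory

/-- `pn n` is the smallest odd integer strictly greater than `n`. -/
def pn (n : ℕ) : ℕ := if n % 2 = 0 then n + 1 else n + 2

/-- The covering constant `c_n = 2 pₙ √n` of Theorem A. -/
noncomputable def cN (n : ℕ) : ℝ := 2 * pn n * Real.sqrt n

/-- The closed axis-parallel cube of center `x` and side length `l`. -/
def ccube {n : ℕ} (x : EuclideanSpace ℝ (Fin n)) (l : ℝ) :
    Set (EuclideanSpace ℝ (Fin n)) :=
  {y | ∀ i, |y i - x i| ≤ l / 2}

lemma ccube_mono {n : ℕ} (x : EuclideanSpace ℝ (Fin n)) {a b : ℝ} (h : a ≤ b) :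
    ccube x a ⊆ ccube x b := fun y hy i => (hy i).trans (by linarith)

lemma isClosed_ccube {n : ℕ} (x : EuclideanSpace ℝ (Fin n)) (l : ℝ) :
    IsClosed (ccube x l) := by
  have : ccube x l = ⋂ i, {y : EuclideanSpace ℝ (Fin n) | |y i - x i| ≤ l / 2} := by
    ext y; simp [ccube, Set.mem_iInter]
  rw [this]
  refine isClosed_iInter fun i => isClosed_le ?_ continuous_const
  exact ((EuclideanSpace.proj (𝕜 := ℝ) i).continuous.sub continuous_const).abs

lemma measurableSet_ccube {n : ℕ} (x : EuclideanSpace ℝ (Fin n)) (l : ℝ) :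
    MeasurableSet (ccube x l) := (isClosed_ccube x l).measurableSet

lemma coord_le_dist {n : ℕ} (x y : EuclideanSpace ℝ (Fin n)) (i : Fin n) :
    |x i - y i| ≤ dist x y := by
  rw [EuclideanSpace.dist_eq, ← Real.sqrt_sq_eq_abs]
  apply Real.sqrt_le_sqrt
  calc (x i - y i) ^ 2 = dist (x i) (y i) ^ 2 := by rw [Real.dist_eq, sq_abs]
  _ ≤ ∑ j, dist (x j) (y j) ^ 2 :=
      Finset.single_le_sum (f := fun j => dist (x j) (y j) ^ 2)
        (fun j _ => sq_nonneg _) (Finset.mem_univ i)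

lemma dist_le_of_mem_ccube {n : ℕ} {x c : EuclideanSpace ℝ (Fin n)} {s : ℝ}
    (hs : 0 ≤ s) (hx : x ∈ ccube c s) : dist x c ≤ Real.sqrt n * (s / 2) := by
  rw [EuclideanSpace.dist_eq]
  have h1 : ∑ i, dist (x i) (c i) ^ 2 ≤ ∑ _i : Fin n, (s / 2) ^ 2 := by
    refine Finset.sum_le_sum fun i _ => ?_
    have := hx i
    rw [Real.dist_eq]
    exact pow_le_pow_left₀ (abs_nonneg _) this 2
  calc Real.sqrt (∑ i, dist (x i) (c i) ^ 2) ≤ Real.sqrt (n * (s / 2) ^ 2) := by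
        apply Real.sqrt_le_sqrt; simpa using h1
  _ = Real.sqrt n * (s / 2) := by
        rw [Real.sqrt_mul (by positivity), Real.sqrt_sq (by positivity)]

lemma exists_step {P : ℕ → Prop} (h0 : ¬ P 0) : ∀ M, P M → ∃ j < M, ¬ P j ∧ P (j + 1) := by
  intro M
  induction M with
  | zero => exact fun h => absurd h h0
  | succ m ih =>
    intro hM
    by_cases hm : P m
    · obtain ⟨j, hj, h⟩ := ih hm
      exact ⟨j, hj.trans (Nat.lt_succ_self m), h⟩
    · exact ⟨m, Nat.lt_succ_self m, hm, hM⟩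

/-- Remark 2: if `Q_j = (c_n α)^j Q` are the concentric dilates of a cube `Q`
of center `x_Q` and side `l`, the cubes `Q_j`, `1 ≤ j < N`, are not
`(c_n α, β)`-doubling and `Q_N` is, then
`∫_{Q_{N+1} \ Q} |x - x_Q|^{-k} dμ ≲ μ(Q_N)/ℓ(Q_N)^k ≲ 1`, with constants
depending only on `n`, `k`, `c_n`, `α`, `β`, `c_μ`. -/
theorem stmt_11 (n : ℕ) (k cμ α β : ℝ) (hk : 0 < k) (hkn : k ≤ n)
    (hα : 3 < α) (hβ : (cN n * α) ^ k < β) (hcμ : 0 < cμ) :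
    ∃ C : ℝ, 0 < C ∧
      ∀ (μ : Measure (EuclideanSpace ℝ (Fin n))),
        (∀ (x : EuclideanSpace ℝ (Fin n)) (r : ℝ), 0 < r →
          μ (Metric.ball x r) ≤ ENNReal.ofReal (cμ * r ^ k)) →
        ∀ (xQ : EuclideanSpace ℝ (Fin n)) (l : ℝ), 0 < l → ∀ N : ℕ, 1 ≤ N →
          (∀ j : ℕ, 1 ≤ j → j < N →
            ENNReal.ofReal β * μ (ccube xQ ((cN n * α) ^ j * l)) <
              μ (ccube xQ ((cN n * α) ^ (j + 1) * l))) →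
          μ (ccube xQ ((cN n * α) ^ (N + 1) * l)) ≤
            ENNReal.ofReal β * μ (ccube xQ ((cN n * α) ^ N * l)) →
          (∫⁻ x in ccube xQ ((cN n * α) ^ (N + 1) * l) \ ccube xQ l,
              ENNReal.ofReal (dist x xQ ^ (-k)) ∂μ) ≤
            ENNReal.ofReal C *
              (μ (ccube xQ ((cN n * α) ^ N * l)) /
                ENNReal.ofReal (((cN n * α) ^ N * l) ^ k)) ∧
          (∫⁻ x in ccube xQ ((cN n * α) ^ (N + 1) * l) \ ccube xQ l,
              ENNReal.ofReal (dist x xQ ^ (-k)) ∂μ) ≤ ENNReal.ofReal C := by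
  classical
  -- basic positivity facts
  have hn1 : 1 ≤ n := by
    rcases Nat.eq_zero_or_pos n with h | h
    · subst h; simp at hkn; linarith
    · exact h
  have hsn : 1 ≤ Real.sqrt n := by
    rw [show (1:ℝ) = Real.sqrt 1 by simp]
    exact Real.sqrt_le_sqrt (by exact_mod_cast hn1)
  have hpn : 1 ≤ (pn n : ℝ) := by
    have : 1 ≤ pn n := by unfold pn; split <;> omega
    exact_mod_cast this
  have hcN : 2 ≤ cN n := by unfold cN; nlinarith
  set A := cN n * α with hAdef
  have hA1 : 1 < A := by nlinarith
  have hA0 : 0 < A := by linarith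
  have hβ0 : 0 < β := lt_trans (Real.rpow_pos_of_pos hA0 k) hβ
  set ρ := A ^ k / β with hρdef
  have hρ0 : 0 < ρ := div_pos (Real.rpow_pos_of_pos hA0 k) hβ0
  have hρ1 : ρ < 1 := (div_lt_one hβ0).2 hβ
  have h2k : (0:ℝ) < 2 ^ k := Real.rpow_pos_of_pos (by norm_num) k
  have hsk : (0:ℝ) < Real.sqrt n ^ k := Real.rpow_pos_of_pos (by linarith) k
  set C1 := (2:ℝ) ^ k * β * (1 - ρ)⁻¹ with hC1def
  have hC1 : 0 < C1 := by
    have h1ρ : (0:ℝ) < 1 - ρ := by linarith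
    positivity
  set C := C1 * (1 + cμ * Real.sqrt n ^ k) with hCdef
  have hCeq : C = C1 + C1 * (cμ * Real.sqrt n ^ k) := by rw [hCdef]; ring
  have hC1C : C1 ≤ C := by
    have := mul_pos hC1 (mul_pos hcμ hsk); linarith
  have hC : 0 < C := lt_of_lt_of_le hC1 hC1C
  refine ⟨C, hC, ?_⟩
  intro μ hμ xQ l hl N hN hchain hdbl
  have ha0 : ∀ j : ℕ, (0:ℝ) < A ^ j * l := fun j => by positivity
  -- chain estimate
  set b : ENNReal := (ENNReal.ofReal β)⁻¹ with hbdef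
  have hβne : ENNReal.ofReal β ≠ 0 := ne_of_gt (ENNReal.ofReal_pos.2 hβ0)
  have hbβ : b * ENNReal.ofReal β = 1 := ENNReal.inv_mul_cancel hβne ENNReal.ofReal_ne_top
  have key : ∀ m : ℕ, m ≤ N - 1 →
      μ (ccube xQ (A ^ (N - m) * l)) ≤ b ^ m * μ (ccube xQ (A ^ N * l)) := by
    intro m
    induction m with
    | zero => intro _; simp
    | succ p ih =>
      intro hp
      have hp' : p ≤ N - 1 := le_of_lt (Nat.lt_of_succ_le hp)
      have h1 : 1 ≤ N - (p + 1) := by omega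
      have h2 : N - (p + 1) < N := by omega
      have h3 : N - (p + 1) + 1 = N - p := by omega
      have hstep := (hchain (N - (p + 1)) h1 h2).le
      rw [h3] at hstep
      have : μ (ccube xQ (A ^ (N - (p + 1)) * l)) ≤ b * μ (ccube xQ (A ^ (N - p) * l)) := by
        calc μ (ccube xQ (A ^ (N - (p + 1)) * l))
            = b * (ENNReal.ofReal β * μ (ccube xQ (A ^ (N - (p + 1)) * l))) := by
              rw [← mul_assoc, hbβ, one_mul]
          _ ≤ b * μ (ccube xQ (A ^ (N - p) * l)) := mul_le_mul_right hstep _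
      calc μ (ccube xQ (A ^ (N - (p + 1)) * l))
          ≤ b * μ (ccube xQ (A ^ (N - p) * l)) := this
        _ ≤ b * (b ^ p * μ (ccube xQ (A ^ N * l))) := mul_le_mul_right (ih hp') _
        _ = b ^ (p + 1) * μ (ccube xQ (A ^ N * l)) := by ring
  -- bound on μ (Q_{j+1}) for j ≤ N
  have hQbound : ∀ j : ℕ, j ≤ N →
      μ (ccube xQ (A ^ (j + 1) * l)) ≤
        ENNReal.ofReal β * b ^ (N - j) * μ (ccube xQ (A ^ N * l)) := by
    intro j hj
    rcases eq_or_lt_of_le hj with rfl | hjN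
    · simpa using hdbl
    · have hm : N - j - 1 ≤ N - 1 := by omega
      have h1 : N - (N - j - 1) = j + 1 := by omega
      have h2 : N - j = (N - j - 1) + 1 := by omega
      have := key (N - j - 1) hm
      rw [h1] at this
      have h2' : ENNReal.ofReal β * b ^ (N - j) = b ^ (N - j - 1) := by
        obtain ⟨m, hm2⟩ : ∃ m, N - j = m + 1 := ⟨N - j - 1, by omega⟩
        rw [hm2, Nat.add_sub_cancel, pow_succ', ← mul_assoc, mul_comm (ENNReal.ofReal β) b,
          hbβ, one_mul]
      calc μ (ccube xQ (A ^ (j + 1) * l)) ≤ b ^ (N - j - 1) * μ (ccube xQ (A ^ N * l)) := this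
        _ = ENNReal.ofReal β * b ^ (N - j) * μ (ccube xQ (A ^ N * l)) := by
            rw [h2']
  -- annuli
  set S : ℕ → Set (EuclideanSpace ℝ (Fin n)) := fun j =>
    if j ≤ N then ccube xQ (A ^ (j + 1) * l) \ ccube xQ (A ^ j * l) else ∅ with hSdef
  have hcover : ccube xQ (A ^ (N + 1) * l) \ ccube xQ l ⊆ ⋃ j, S j := by
    intro x hx
    have hx0 : x ∉ ccube xQ (A ^ 0 * l) := by
      rw [pow_zero, one_mul]; exact hx.2
    obtain ⟨j, hjlt, hnotin, hin⟩ :=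
      exists_step (P := fun j => x ∈ ccube xQ (A ^ j * l)) hx0 (N + 1) hx.1
    have hj : j ≤ N := Nat.lt_succ_iff.mp hjlt
    exact Set.mem_iUnion.2 ⟨j, by simp only [hSdef, if_pos hj]; exact ⟨hin, hnotin⟩⟩
  -- per-annulus bound
  have hann : ∀ j : ℕ, j ≤ N →
      (∫⁻ x in S j, ENNReal.ofReal (dist x xQ ^ (-k)) ∂μ) ≤
        ENNReal.ofReal ((2:ℝ) ^ k * ((A ^ N * l) ^ k)⁻¹ * β * ρ ^ (N - j)) *
          μ (ccube xQ (A ^ N * l)) := by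
    intro j hj
    have hSj : S j = ccube xQ (A ^ (j + 1) * l) \ ccube xQ (A ^ j * l) := if_pos hj
    have hmeas : MeasurableSet (S j) := by
      rw [hSj]; exact (measurableSet_ccube _ _).diff (measurableSet_ccube _ _)
    -- pointwise bound on the annulus
    have hpt : ∀ x ∈ S j, ENNReal.ofReal (dist x xQ ^ (-k)) ≤
        ENNReal.ofReal ((A ^ j * l / 2) ^ (-k)) := by
      intro x hx
      rw [hSj] at hx
      obtain ⟨i, hi⟩ := not_forall.mp hx.2
      push_neg at hi
      have hd : A ^ j * l / 2 ≤ dist x xQ := le_trans hi.le (coord_le_dist x xQ i)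
      exact ENNReal.ofReal_le_ofReal
        (Real.rpow_le_rpow_of_nonpos (by positivity) hd (by linarith))
    have step1 : (∫⁻ x in S j, ENNReal.ofReal (dist x xQ ^ (-k)) ∂μ) ≤
        ENNReal.ofReal ((A ^ j * l / 2) ^ (-k)) * μ (S j) := by
      calc (∫⁻ x in S j, ENNReal.ofReal (dist x xQ ^ (-k)) ∂μ)
          ≤ ∫⁻ _x in S j, ENNReal.ofReal ((A ^ j * l / 2) ^ (-k)) ∂μ :=
            lintegral_mono_ae (ae_restrict_of_forall_mem hmeas hpt)
        _ = ENNReal.ofReal ((A ^ j * l / 2) ^ (-k)) * μ (S j) := by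
            rw [setLIntegral_const]
    have hμS : μ (S j) ≤ μ (ccube xQ (A ^ (j + 1) * l)) := by
      rw [hSj]; exact measure_mono Set.diff_subset
    -- the real computation
    have hreal : (A ^ j * l / 2) ^ (-k) =
        (2:ℝ) ^ k * ((A ^ N * l) ^ k)⁻¹ * (A ^ k) ^ (N - j) := by
      have haj : (0:ℝ) < A ^ j * l := ha0 j
      have hsplit : (A ^ N * l) ^ k = (A ^ j * l) ^ k * (A ^ k) ^ (N - j) := by
        have hNj : A ^ N * l = (A ^ j * l) * A ^ (N - j) := by
          rw [mul_comm (A ^ j * l) (A ^ (N - j)), ← mul_assoc, ← pow_add]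
          congr 2
          omega
        rw [hNj, Real.mul_rpow (by positivity) (by positivity)]
        congr 1
        rw [← Real.rpow_natCast A (N - j), ← Real.rpow_mul hA0.le,
          mul_comm ((N - j : ℕ) : ℝ) k, Real.rpow_mul hA0.le, Real.rpow_natCast]
      rw [Real.rpow_neg (by positivity), Real.div_rpow haj.le (by norm_num),
        hsplit]
      have hAk : (0:ℝ) < (A ^ k) ^ (N - j) := by positivity
      have hajk : (0:ℝ) < (A ^ j * l) ^ k := Real.rpow_pos_of_pos haj k
      field_simp
    calc (∫⁻ x in S j, ENNReal.ofReal (dist x xQ ^ (-k)) ∂μ)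
        ≤ ENNReal.ofReal ((A ^ j * l / 2) ^ (-k)) * μ (ccube xQ (A ^ (j + 1) * l)) :=
          step1.trans (mul_le_mul_right hμS _)
      _ ≤ ENNReal.ofReal ((A ^ j * l / 2) ^ (-k)) *
            (ENNReal.ofReal β * b ^ (N - j) * μ (ccube xQ (A ^ N * l))) :=
          mul_le_mul_right (hQbound j hj) _
      _ = ENNReal.ofReal ((2:ℝ) ^ k * ((A ^ N * l) ^ k)⁻¹ * β * ρ ^ (N - j)) *
            μ (ccube xQ (A ^ N * l)) := by
          rw [hreal]
          have e1 : ENNReal.ofReal ((2:ℝ) ^ k * ((A ^ N * l) ^ k)⁻¹ * (A ^ k) ^ (N - j)) =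
              ENNReal.ofReal ((2:ℝ) ^ k * ((A ^ N * l) ^ k)⁻¹) *
                ENNReal.ofReal (A ^ k) ^ (N - j) := by
            rw [ENNReal.ofReal_mul (by positivity), ENNReal.ofReal_pow (by positivity)]
          have e2 : ENNReal.ofReal (A ^ k) ^ (N - j) * (ENNReal.ofReal β * b ^ (N - j)) =
              ENNReal.ofReal β * (ENNReal.ofReal (A ^ k) * b) ^ (N - j) := by
            rw [mul_pow]; ring
          have e3 : ENNReal.ofReal (A ^ k) * b = ENNReal.ofReal ρ := by
            rw [hρdef, ENNReal.ofReal_div_of_pos hβ0, ENNReal.div_eq_inv_mul, mul_comm]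
          rw [← mul_assoc, e1, mul_assoc _ _ (ENNReal.ofReal β * b ^ (N - j)), e2, e3,
            ← ENNReal.ofReal_pow hρ0.le,
            ← ENNReal.ofReal_mul (by positivity), ← ENNReal.ofReal_mul (by positivity)]
          ring_nf
  -- summing up
  have hmain : (∫⁻ x in ccube xQ (A ^ (N + 1) * l) \ ccube xQ l,
        ENNReal.ofReal (dist x xQ ^ (-k)) ∂μ) ≤
      ENNReal.ofReal C1 * (μ (ccube xQ (A ^ N * l)) / ENNReal.ofReal ((A ^ N * l) ^ k)) := by
    have hzero : ∀ j ∉ Finset.range (N + 1),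
        (∫⁻ x in S j, ENNReal.ofReal (dist x xQ ^ (-k)) ∂μ) = 0 := by
      intro j hj
      have : ¬ j ≤ N := by simpa [Nat.lt_succ_iff] using hj
      simp only [hSdef, if_neg this]
      simp
    have hgeom : ∑ j ∈ Finset.range (N + 1),
        ((2:ℝ) ^ k * ((A ^ N * l) ^ k)⁻¹ * β * ρ ^ (N - j)) ≤ C1 * ((A ^ N * l) ^ k)⁻¹ := by
      have hsum : ∑ j ∈ Finset.range (N + 1), ρ ^ (N - j) ≤ (1 - ρ)⁻¹ := by
        have : ∑ j ∈ Finset.range (N + 1), ρ ^ (N - j) = ∑ m ∈ Finset.range (N + 1), ρ ^ m := by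
          refine Finset.sum_nbij' (fun j => N - j) (fun m => N - m) ?_ ?_ ?_ ?_ ?_ <;>
            intro x hx <;> simp only [Finset.mem_range, Nat.lt_succ_iff] at * <;> omega
        rw [this]
        calc ∑ m ∈ Finset.range (N + 1), ρ ^ m ≤ ∑' m : ℕ, ρ ^ m :=
              Summable.sum_le_tsum _ (fun m _ => by positivity)
                (summable_geometric_of_lt_one hρ0.le hρ1)
          _ = (1 - ρ)⁻¹ := tsum_geometric_of_lt_one hρ0.le hρ1
      calc ∑ j ∈ Finset.range (N + 1), ((2:ℝ) ^ k * ((A ^ N * l) ^ k)⁻¹ * β * ρ ^ (N - j))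
          = (2:ℝ) ^ k * ((A ^ N * l) ^ k)⁻¹ * β * ∑ j ∈ Finset.range (N + 1), ρ ^ (N - j) := by
            rw [Finset.mul_sum]
        _ ≤ (2:ℝ) ^ k * ((A ^ N * l) ^ k)⁻¹ * β * (1 - ρ)⁻¹ := by
            have : (0:ℝ) < ((A ^ N * l) ^ k)⁻¹ := by positivity
            have hnn : (0:ℝ) ≤ (2:ℝ) ^ k * ((A ^ N * l) ^ k)⁻¹ * β := by positivity
            exact mul_le_mul_of_nonneg_left hsum hnn
        _ = C1 * ((A ^ N * l) ^ k)⁻¹ := by rw [hC1def]; ring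
    calc (∫⁻ x in ccube xQ (A ^ (N + 1) * l) \ ccube xQ l,
            ENNReal.ofReal (dist x xQ ^ (-k)) ∂μ)
        ≤ ∫⁻ x in ⋃ j, S j, ENNReal.ofReal (dist x xQ ^ (-k)) ∂μ :=
          lintegral_mono_set hcover
      _ ≤ ∑' j, ∫⁻ x in S j, ENNReal.ofReal (dist x xQ ^ (-k)) ∂μ :=
          lintegral_iUnion_le _ _
      _ = ∑ j ∈ Finset.range (N + 1), ∫⁻ x in S j, ENNReal.ofReal (dist x xQ ^ (-k)) ∂μ :=
          tsum_eq_sum hzero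
      _ ≤ ∑ j ∈ Finset.range (N + 1),
            ENNReal.ofReal ((2:ℝ) ^ k * ((A ^ N * l) ^ k)⁻¹ * β * ρ ^ (N - j)) *
              μ (ccube xQ (A ^ N * l)) :=
          Finset.sum_le_sum fun j hj => hann j (Nat.lt_succ_iff.mp (Finset.mem_range.mp hj))
      _ = ENNReal.ofReal (∑ j ∈ Finset.range (N + 1),
            ((2:ℝ) ^ k * ((A ^ N * l) ^ k)⁻¹ * β * ρ ^ (N - j))) *
              μ (ccube xQ (A ^ N * l)) := by
          rw [← Finset.sum_mul, ← ENNReal.ofReal_sum_of_nonneg (fun j _ => by positivity)]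
      _ ≤ ENNReal.ofReal (C1 * ((A ^ N * l) ^ k)⁻¹) * μ (ccube xQ (A ^ N * l)) :=
          mul_le_mul_left (ENNReal.ofReal_le_ofReal hgeom) _
      _ = ENNReal.ofReal C1 * (μ (ccube xQ (A ^ N * l)) / ENNReal.ofReal ((A ^ N * l) ^ k)) := by
          rw [ENNReal.ofReal_mul hC1.le,
            ENNReal.ofReal_inv_of_pos (Real.rpow_pos_of_pos (ha0 N) k),
            div_eq_mul_inv]
          ring
  -- second bound ingredient
  have hratio : μ (ccube xQ (A ^ N * l)) / ENNReal.ofReal ((A ^ N * l) ^ k) ≤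
      ENNReal.ofReal (cμ * Real.sqrt n ^ k) := by
    have hball : ccube xQ (A ^ N * l) ⊆ Metric.ball xQ (Real.sqrt n * (A ^ N * l)) := by
      intro x hx
      have := dist_le_of_mem_ccube (ha0 N).le hx
      have hpos : (0:ℝ) < Real.sqrt n * (A ^ N * l) := by
        have := ha0 N; nlinarith
      refine Metric.mem_ball.2 (lt_of_le_of_lt this ?_)
      nlinarith [ha0 N]
    have hμb : μ (ccube xQ (A ^ N * l)) ≤
        ENNReal.ofReal (cμ * Real.sqrt n ^ k * (A ^ N * l) ^ k) := by
      have := hμ xQ (Real.sqrt n * (A ^ N * l)) (by nlinarith [ha0 N])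
      refine le_trans (measure_mono hball) (this.trans (le_of_eq ?_))
      rw [Real.mul_rpow (by positivity) (ha0 N).le]
      ring_nf
    rw [ENNReal.div_le_iff_le_mul (Or.inl ?h1) (Or.inr ?h2)]
    · refine hμb.trans (le_of_eq ?_)
      rw [← ENNReal.ofReal_mul (by positivity)]
    · exact ne_of_gt (ENNReal.ofReal_pos.2 (Real.rpow_pos_of_pos (ha0 N) k))
    · exact ne_of_gt (ENNReal.ofReal_pos.2 (by positivity))
  constructor
  · exact hmain.trans (mul_le_mul_left (ENNReal.ofReal_le_ofReal hC1C) _)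
  · calc (∫⁻ x in ccube xQ (A ^ (N + 1) * l) \ ccube xQ l,
          ENNReal.ofReal (dist x xQ ^ (-k)) ∂μ)
        ≤ ENNReal.ofReal C1 * (μ (ccube xQ (A ^ N * l)) / ENNReal.ofReal ((A ^ N * l) ^ k)) :=
          hmain
      _ ≤ ENNReal.ofReal C1 * ENNReal.ofReal (cμ * Real.sqrt n ^ k) :=
          mul_le_mul_right hratio _
      _ = ENNReal.ofReal (C1 * (cμ * Real.sqrt n ^ k)) :=
          (ENNReal.ofReal_mul hC1.le).symm
      _ ≤ ENNReal.ofReal C := ENNReal.ofReal_le_ofReal (by linarith [mul_pos hC1 (mul_pos hcμ hsk)])
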